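/- Let D be a topological space and let (E, w) with E : D → Set P, w : D → P → S and (E′, w′) with E′ : D → Set P′, w′ : D → P′ → S′ be two stable continuation data, with induced fibers G(φ) = w(φ) '' E(φ) and G′(φ) = w′(φ) '' E′(φ). Define the product data (E × E′)(φ) = E(φ) ×ˢ E′(φ) ⊆ P × P′ and (w × w′)(φ)(U,U′) = (w(φ)(U), w′(φ)(U′)). Then: (1) E × E′ is stable, i.e. {φ : (U,U′) ∈ (E×E′)(φ)} = Φ[E;U] ∩ Φ[E′;U′] is open for all (U,U′); (2) the map g : Π[G×G′] → Π[G] • Π[G′] given by (φ,(s,s′)) ↦ ((φ,s),(φ,s′)) is a homeomorphism, where Π[G×G′] carries the étalé topology induced by (E×E′, w×w′) and Π[G] • Π[G′] = {(p,q) ∈ Π[G] × Π[G′] : π(p) = π(q)} carries the subspace topology of the product of the étalé topologies. -/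

import Mathlib

open Set Topology TopologicalSpace

/-- `Φ[E;U] = {φ ∈ D : U ∈ E(φ)}`. -/
def PhiSet {D P : Type*} (E : D → Set P) (U : P) : Set D := {φ : D | U ∈ E φ}

/-- `E` is stable: every `Φ[E;U]` is open. -/
def IsStable {D P : Type*} [TopologicalSpace D] (E : D → Set P) : Prop :=
  ∀ U : P, IsOpen (PhiSet E U)

/-- The underlying set of the étalé space `Π[G]`, where `G(φ) = w(φ) '' E(φ)`. -/
def PiG {D P S : Type*} (E : D → Set P) (w : D → P → S) : Type _ :=
  {p : D × S // p.2 ∈ w p.1 '' E p.1}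

/-- The étalé topology on `Π[G]`. -/
def etaleTopG {D P S : Type*} [TopologicalSpace D] (E : D → Set P) (w : D → P → S) :
    TopologicalSpace (PiG E w) :=
  TopologicalSpace.generateFrom
    {V : Set (PiG E w) | ∃ (U : P) (Ω : Set D), IsOpen Ω ∧ Ω ⊆ PhiSet E U ∧
      V = {p : PiG E w | p.1.1 ∈ Ω ∧ p.1.2 = w p.1.1 U}}

/-- The comparison map `g : Π[G×G′] → Π[G] • Π[G′]`,
`(φ,(s,s′)) ↦ ((φ,s),(φ,s′))`. -/
def gMap {D P P' S S' : Type*} (E : D → Set P) (E' : D → Set P')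
    (w : D → P → S) (w' : D → P' → S') :
    PiG (fun φ => E φ ×ˢ E' φ) (fun φ q => (w φ q.1, w' φ q.2)) →
      {q : PiG E w × PiG E' w' // q.1.1.1 = q.2.1.1} :=
  fun p =>
    ⟨(⟨(p.1.1, p.1.2.1), by
        obtain ⟨q, hq, h⟩ := p.2
        exact ⟨q.1, hq.1, congrArg Prod.fst h⟩⟩,
      ⟨(p.1.1, p.1.2.2), by
        obtain ⟨q, hq, h⟩ := p.2
        exact ⟨q.2, hq.2, congrArg Prod.snd h⟩⟩), rfl⟩

section Aux

variable {D P P' S S' : Type*} [TopologicalSpace D]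
    (E : D → Set P) (E' : D → Set P') (w : D → P → S) (w' : D → P' → S')

/-- The inverse of `gMap`. -/
def gInv : {q : PiG E w × PiG E' w' // q.1.1.1 = q.2.1.1} →
    PiG (fun φ => E φ ×ˢ E' φ) (fun φ q => (w φ q.1, w' φ q.2)) :=
  fun q =>
    ⟨(q.1.1.1.1, (q.1.1.1.2, q.1.2.1.2)), by
      obtain ⟨⟨⟨⟨φ, s⟩, hs⟩, ⟨⟨φ', s'⟩, hs'⟩⟩, (hq : φ = φ')⟩ := q
      subst hq
      obtain ⟨a, ha, h1⟩ := hs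
      obtain ⟨b, hb, h2⟩ := hs'
      exact ⟨(a, b), ⟨ha, hb⟩, by
        show (w φ a, w' φ b) = (s, s')
        rw [show w φ a = s from h1, show w' φ b = s' from h2]⟩⟩

/-- `gMap` as an equivalence. -/
def gEquiv : PiG (fun φ => E φ ×ˢ E' φ) (fun φ q => (w φ q.1, w' φ q.2)) ≃
    {q : PiG E w × PiG E' w' // q.1.1.1 = q.2.1.1} where
  toFun := gMap E E' w w'
  invFun := gInv E E' w w'
  left_inv p := by
    apply Subtype.ext
    rfl
  right_inv q := by
    obtain ⟨⟨⟨⟨φ, s⟩, hs⟩, ⟨⟨φ', s'⟩, hs'⟩⟩, (hq : φ = φ')⟩ := q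
    subst hq
    rfl

theorem gMap_homeo (hE : IsStable E) (hE' : IsStable E') :
    letI : TopologicalSpace (PiG E w) := etaleTopG E w
    letI : TopologicalSpace (PiG E' w') := etaleTopG E' w'
    letI : TopologicalSpace (PiG (fun φ => E φ ×ˢ E' φ) (fun φ q => (w φ q.1, w' φ q.2))) :=
      etaleTopG (fun φ => E φ ×ˢ E' φ) (fun φ q => (w φ q.1, w' φ q.2))
    IsHomeomorph (gMap E E' w w') := by
  letI : TopologicalSpace (PiG E w) := etaleTopG E w
  letI : TopologicalSpace (PiG E' w') := etaleTopG E' w'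
  letI : TopologicalSpace (PiG (fun φ => E φ ×ˢ E' φ) (fun φ q => (w φ q.1, w' φ q.2))) :=
    etaleTopG (fun φ => E φ ×ˢ E' φ) (fun φ q => (w φ q.1, w' φ q.2))
  have hΘ : ∀ (U : P) (Ω : Set D), IsOpen Ω → Ω ⊆ PhiSet E U →
      IsOpen {p : PiG E w | p.1.1 ∈ Ω ∧ p.1.2 = w p.1.1 U} := fun U Ω hΩ hsub =>
    TopologicalSpace.isOpen_generateFrom_of_mem ⟨U, Ω, hΩ, hsub, rfl⟩
  have hΘ' : ∀ (U' : P') (Ω : Set D), IsOpen Ω → Ω ⊆ PhiSet E' U' →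
      IsOpen {p : PiG E' w' | p.1.1 ∈ Ω ∧ p.1.2 = w' p.1.1 U'} := fun U' Ω hΩ hsub =>
    TopologicalSpace.isOpen_generateFrom_of_mem ⟨U', Ω, hΩ, hsub, rfl⟩
  have hcont : Continuous (gMap E E' w w') := by
    apply Continuous.subtype_mk
    apply Continuous.prodMk
    · refine continuous_generateFrom_iff.mpr ?_
      rintro V ⟨U, Ω, hΩ, hsub, rfl⟩
      have hopen : IsOpen (⋃ U' : P',
          {p : PiG (fun φ => E φ ×ˢ E' φ) (fun φ q => (w φ q.1, w' φ q.2)) |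
            p.1.1 ∈ Ω ∩ PhiSet E' U' ∧ p.1.2 = (w p.1.1 U, w' p.1.1 U')}) := by
        apply isOpen_iUnion
        intro U'
        apply TopologicalSpace.isOpen_generateFrom_of_mem
        refine ⟨(U, U'), Ω ∩ PhiSet E' U', hΩ.inter (hE' U'), ?_, rfl⟩
        rintro φ ⟨h1, h2⟩
        exact ⟨hsub h1, h2⟩
      convert hopen using 1
      ext p
      simp only [Set.mem_preimage, Set.mem_setOf_eq, Set.mem_iUnion, Set.mem_inter_iff]
      constructor
      · rintro ⟨hpΩ, hps⟩
        obtain ⟨⟨a, b⟩, ⟨ha, hb⟩, hab⟩ := p.2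
        refine ⟨b, ⟨hpΩ, hb⟩, ?_⟩
        have h2 : p.1.2.2 = w' p.1.1 b := (congrArg Prod.snd hab).symm
        rw [← hps, ← h2]
      · rintro ⟨U', ⟨hpΩ, _⟩, hps⟩
        exact ⟨hpΩ, congrArg Prod.fst hps⟩
    · refine continuous_generateFrom_iff.mpr ?_
      rintro V ⟨U', Ω, hΩ, hsub, rfl⟩
      have hopen : IsOpen (⋃ U : P,
          {p : PiG (fun φ => E φ ×ˢ E' φ) (fun φ q => (w φ q.1, w' φ q.2)) |
            p.1.1 ∈ Ω ∩ PhiSet E U ∧ p.1.2 = (w p.1.1 U, w' p.1.1 U')}) := by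
        apply isOpen_iUnion
        intro U
        apply TopologicalSpace.isOpen_generateFrom_of_mem
        refine ⟨(U, U'), Ω ∩ PhiSet E U, hΩ.inter (hE U), ?_, rfl⟩
        rintro φ ⟨h1, h2⟩
        exact ⟨h2, hsub h1⟩
      convert hopen using 1
      ext p
      simp only [Set.mem_preimage, Set.mem_setOf_eq, Set.mem_iUnion, Set.mem_inter_iff]
      constructor
      · rintro ⟨hpΩ, hps⟩
        obtain ⟨⟨a, b⟩, ⟨ha, hb⟩, hab⟩ := p.2
        refine ⟨a, ⟨hpΩ, ha⟩, ?_⟩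
        have h1 : p.1.2.1 = w p.1.1 a := (congrArg Prod.fst hab).symm
        rw [← hps, ← h1]
      · rintro ⟨U, ⟨hpΩ, _⟩, hps⟩
        exact ⟨hpΩ, congrArg Prod.snd hps⟩
  have hcontinv : Continuous (gInv E E' w w') := by
    refine continuous_generateFrom_iff.mpr ?_
    rintro V ⟨⟨U, U'⟩, Ω, hΩ, hsub, rfl⟩
    have hopen : IsOpen (Subtype.val ⁻¹'
        (({p : PiG E w | p.1.1 ∈ Ω ∧ p.1.2 = w p.1.1 U} : Set (PiG E w)) ×ˢ
          {p : PiG E' w' | p.1.1 ∈ Ω ∧ p.1.2 = w' p.1.1 U'}) :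
        Set {q : PiG E w × PiG E' w' // q.1.1.1 = q.2.1.1}) :=
      ((hΘ U Ω hΩ fun φ h => (hsub h).1).prod
        (hΘ' U' Ω hΩ fun φ h => (hsub h).2)).preimage continuous_subtype_val
    convert hopen using 1
    ext q
    obtain ⟨⟨⟨⟨φ, s⟩, hs⟩, ⟨⟨φ', s'⟩, hs'⟩⟩, (hq : φ = φ')⟩ := q
    subst hq
    simp only [Set.mem_preimage, Set.mem_setOf_eq, Set.mem_prod]
    show (φ ∈ Ω ∧ (s, s') = (w φ U, w' φ U')) ↔
      (φ ∈ Ω ∧ s = w φ U) ∧ (φ ∈ Ω ∧ s' = w' φ U')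
    constructor
    · rintro ⟨h1, h2⟩
      exact ⟨⟨h1, congrArg Prod.fst h2⟩, h1, congrArg Prod.snd h2⟩
    · rintro ⟨⟨h1, h2⟩, ⟨h3, h4⟩⟩
      exact ⟨h1, by rw [← h2, ← h4]⟩
  exact (Homeomorph.mk (gEquiv E E' w w') hcont hcontinv).isHomeomorph

end Aux

/-- For stable continuation data `(E,w)` and `(E′,w′)`: (1) the product data
`(E×E′, w×w′)` is stable, with `Φ[E×E′;(U,U′)] = Φ[E;U] ∩ Φ[E′;U′]`; (2) the map
`g : Π[G×G′] → Π[G] • Π[G′]`, `(φ,(s,s′)) ↦ ((φ,s),(φ,s′))`, is a homeomorphism, where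
`Π[G] • Π[G′]` is the fiber product `{(p,q) : π(p) = π(q)}` with the subspace topology of
the product of the étalé topologies. -/
theorem stmt14 {D P P' S S' : Type*} [TopologicalSpace D]
    (E : D → Set P) (E' : D → Set P') (w : D → P → S) (w' : D → P' → S')
    (hE : IsStable E) (hE' : IsStable E') :
    (∀ (U : P) (U' : P'),
      PhiSet (fun φ => E φ ×ˢ E' φ) (U, U') = PhiSet E U ∩ PhiSet E' U' ∧
        IsOpen (PhiSet (fun φ => E φ ×ˢ E' φ) (U, U'))) ∧
      (letI : TopologicalSpace (PiG E w) := etaleTopG E w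
       letI : TopologicalSpace (PiG E' w') := etaleTopG E' w'
       letI : TopologicalSpace (PiG (fun φ => E φ ×ˢ E' φ) (fun φ q => (w φ q.1, w' φ q.2))) :=
         etaleTopG (fun φ => E φ ×ˢ E' φ) (fun φ q => (w φ q.1, w' φ q.2))
       IsHomeomorph (gMap E E' w w')) := by
  constructor
  · intro U U'
    have h : PhiSet (fun φ => E φ ×ˢ E' φ) (U, U') = PhiSet E U ∩ PhiSet E' U' := by
      ext φ
      simp [PhiSet, Set.mem_prod]
    exact ⟨h, h ▸ (hE U).inter (hE' U')⟩
  · exact gMap_homeo E E' w w' hE hE'
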